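/- (Exactness of SimDex index, K = 1 case) Let items be enumerated in a list L sorted in descending order by upper bounds b with b(i) ≥ r(i) for all items i. Suppose the traversal returns item i_w after stopping at the first position m where the current best true rating r(i_w) exceeds b(L[m]) (i_w being the argmax of r over L[0..m−1]). Then r(i_w) = max over all items i in L of r(i). -/

import Mathlib

/-- Exactness of SimDex index traversal for K = 1: the item returned when the traversal
stops has the maximum true rating over the whole list. -/
theorem simdex_top1_exact {α : Type*} (L : List α) (r b : α → ℝ)
    (hb : ∀ i, r i ≤ b i)
    (hsorted : (L.map b).Pairwise (· ≥ ·))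
    (m : ℕ) (hm : m < L.length)
    (iw : α) (hiw : iw ∈ L.take m)
    (hmax : ∀ i ∈ L.take m, r i ≤ r iw)
    (hstop : b (L.get ⟨m, hm⟩) < r iw) :
    ∀ i ∈ L, r i ≤ r iw := by
  intro i hi
  obtain ⟨k, hk, rfl⟩ := List.mem_iff_get.mp hi
  by_cases hkm : (k : ℕ) < m
  · exact hmax _ (by
      rw [List.mem_take_iff_getElem]
      exact ⟨k, by omega, by simp⟩)
  · have hle : b (L.get k) ≤ b (L.get ⟨m, hm⟩) := by
      have := hsorted.rel_get_of_le (a := ⟨m, by simpa using hm⟩)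
        (b := ⟨k, by simpa using k.2⟩) (by simp only [Fin.mk_le_mk]; omega)
      simpa using this
    exact le_trans (hb _) (le_trans hle hstop.le)
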